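/- Let a ≥ 3 be an integer and let β be the unique real root greater than 1 of the polynomial P(X) = X^3 − aX^2 − (a−1)X + 1. Then L_⊕(β) = 1. -/

import Mathlib

set_option maxHeartbeats 1000000

open Polynomial

/-- The β-transformation `T_β(x) = βx - ⌊βx⌋`. -/
noncomputable def betaT (β : ℝ) : ℝ → ℝ := fun x => β * x - ⌊β * x⌋

/-- `fin(β)`: reals `x` such that `|x|/β^N ∈ [0,1)` and the greedy expansion of
`|x|/β^N` is finite, for some `N, n ∈ ℕ`. -/
def finBeta (β : ℝ) : Set ℝ :=
  {x | ∃ N n : ℕ, |x| / β ^ N ∈ Set.Ico (0 : ℝ) 1 ∧ (betaT β)^[n] (|x| / β ^ N) = 0}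

/-- `ℤ_β`: the set of β-integers. -/
def betaInt (β : ℝ) : Set ℝ :=
  {x | ∃ N : ℕ, |x| / β ^ N ∈ Set.Ico (0 : ℝ) 1 ∧ (betaT β)^[N] (|x| / β ^ N) = 0}

/-- `L_⊕(β)`: the least `L ∈ ℕ` such that `β^L·(x+y) ∈ ℤ_β` for all
`x, y ∈ ℤ_β` with `x + y ∈ fin(β)`. -/
noncomputable def Lplus (β : ℝ) : ℕ :=
  sInf {L : ℕ | ∀ x ∈ betaInt β, ∀ y ∈ betaInt β,
    x + y ∈ finBeta β → β ^ L * (x + y) ∈ betaInt β}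

/-- `L_⊗(β)`: the least `L ∈ ℕ` such that `β^L·(x·y) ∈ ℤ_β` for all
`x, y ∈ ℤ_β` with `x·y ∈ fin(β)`. -/
noncomputable def Lmul (β : ℝ) : ℕ :=
  sInf {L : ℕ | ∀ x ∈ betaInt β, ∀ y ∈ betaInt β,
    x * y ∈ finBeta β → β ^ L * (x * y) ∈ betaInt β}

section AuxLemmas

open Finset


noncomputable def bR (β u : ℝ) (k : ℕ) : ℝ := (betaT β)^[k] u
noncomputable def bD (β u : ℝ) (k : ℕ) : ℤ := ⌊β * bR β u k⌋

lemma betaT_mem (β x : ℝ) : betaT β x ∈ Set.Ico (0:ℝ) 1 := by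
  constructor
  · have := Int.floor_le (β * x); simp only [betaT]; linarith
  · have := Int.lt_floor_add_one (β * x); simp only [betaT]; linarith

lemma bR_zero (β u : ℝ) : bR β u 0 = u := rfl

lemma bR_succ (β u : ℝ) (k : ℕ) : bR β u (k+1) = β * bR β u k - bD β u k := by
  simp [bR, bD, Function.iterate_succ_apply', betaT]

lemma bR_mem (β u : ℝ) (hu : u ∈ Set.Ico (0:ℝ) 1) (k : ℕ) : bR β u k ∈ Set.Ico (0:ℝ) 1 := by
  cases k with
  | zero => exact hu
  | succ n => rw [bR, Function.iterate_succ_apply']; exact betaT_mem β _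

lemma bD_nonneg (β u : ℝ) (hβ : 0 < β) (hu : u ∈ Set.Ico (0:ℝ) 1) (k : ℕ) : 0 ≤ bD β u k := by
  have h := bR_mem β u hu k
  exact Int.floor_nonneg.2 (mul_nonneg hβ.le h.1)

lemma bD_le (a : ℤ) (β u : ℝ) (hβ : 0 < β) (hβa1 : β < (a:ℝ) + 1)
    (hu : u ∈ Set.Ico (0:ℝ) 1) (k : ℕ) : bD β u k ≤ a := by
  have h := bR_mem β u hu k
  have : β * bR β u k < (a:ℝ) + 1 := by nlinarith [h.1, h.2]
  have : β * bR β u k < ((a+1 : ℤ) : ℝ) := by push_cast; linarith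
  have h2 := Int.floor_lt.2 this
  simp only [bD]
  omega

lemma bR_sum (β u : ℝ) : ∀ M : ℕ,
    β ^ M * u = (∑ k ∈ range M, (bD β u k : ℝ) * β ^ (M - 1 - k)) + bR β u M := by
  intro M
  induction M with
  | zero => simp [bR_zero]
  | succ N ih =>
    have h : β ^ (N+1) * u = β * (β ^ N * u) := by ring
    rw [h, ih, bR_succ]
    rw [mul_add, Finset.mul_sum]
    have hsum : ∀ k ∈ range N, β * ((bD β u k : ℝ) * β ^ (N - 1 - k))
        = (bD β u k : ℝ) * β ^ (N + 1 - 1 - k) := by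
      intro k hk
      have hk' : k < N := mem_range.1 hk
      have : N + 1 - 1 - k = (N - 1 - k) + 1 := by omega
      rw [this, pow_succ]; ring
    rw [Finset.sum_congr rfl hsum, Finset.sum_range_succ (fun k => (bD β u k : ℝ) * β ^ (N + 1 - 1 - k))]
    have : N + 1 - 1 - N = 0 := by omega
    rw [this]
    ring

lemma bR_zero_persist (β u : ℝ) {n : ℕ} (h : bR β u n = 0) : ∀ m, n ≤ m → bR β u m = 0 := by
  intro m hm
  induction m with
  | zero => simpa [Nat.le_zero.1 hm] using h
  | succ k ih =>
    rcases Nat.lt_or_ge n (k+1) with h1 | h1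
    · have := ih (by omega)
      rw [bR_succ, this, bD, this]
      simp
    · have : n = k + 1 := by omega
      rwa [← this]

lemma bR_backzero (β u : ℝ) (hβ : 0 < β) {j n : ℕ} (hn : bR β u n = 0)
    (hd : ∀ k, j ≤ k → bD β u k = 0) (hjn : j ≤ n) : bR β u j = 0 := by
  have key : ∀ i, bR β u (j + i) = β ^ i * bR β u j := by
    intro i
    induction i with
    | zero => simp
    | succ m ih =>
      have : j + (m+1) = (j + m) + 1 := by omega
      rw [this, bR_succ, ih, hd (j+m) (by omega)]
      push_cast
      ring
  have h2 := key (n - j)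
  rw [show j + (n - j) = n by omega, hn] at h2
  have : β ^ (n - j) > 0 := pow_pos hβ _
  nlinarith [h2]


lemma beta_gt {a : ℤ} {β : ℝ} (ha : 3 ≤ a) (hβ : 1 < β)
    (hroot : β ^ 3 - (a : ℝ) * β ^ 2 - ((a : ℝ) - 1) * β + 1 = 0) : (a:ℝ) < β := by
  have ha' : (3:ℝ) ≤ (a:ℝ) := by exact_mod_cast ha
  by_contra h
  push_neg at h
  nlinarith [sq_nonneg β, sq_nonneg (β-1)]

lemma beta_lt {a : ℤ} {β : ℝ} (ha : 3 ≤ a) (hβ : 1 < β)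
    (hroot : β ^ 3 - (a : ℝ) * β ^ 2 - ((a : ℝ) - 1) * β + 1 = 0) : β < (a:ℝ) + 1 := by
  have ha' : (3:ℝ) ≤ (a:ℝ) := by exact_mod_cast ha
  by_contra h
  push_neg at h
  nlinarith [sq_nonneg β]

lemma gamma_exists {a : ℤ} {β : ℝ} (ha : 3 ≤ a) (hβ : 1 < β)
    (hroot : β ^ 3 - (a : ℝ) * β ^ 2 - ((a : ℝ) - 1) * β + 1 = 0) :
    ∃ γ : ℝ, 0 < γ ∧ γ < 1 ∧ 1 < (2*(a:ℝ)-3) * γ ∧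
      γ ^ 3 - (a : ℝ) * γ ^ 2 - ((a : ℝ) - 1) * γ + 1 = 0 := by
  have ha' : (3:ℝ) ≤ (a:ℝ) := by exact_mod_cast ha
  have hβa := beta_gt ha hβ hroot
  have hβa1 := beta_lt ha hβ hroot
  have hβ0 : (0:ℝ) < β := by linarith
  have hβne : β ≠ 0 := ne_of_gt hβ0
  have hDpos : (0:ℝ) < (β - a)^2 + 4/β := by positivity
  set s : ℝ := Real.sqrt ((β - a)^2 + 4/β) with hs
  have hs0 : 0 ≤ s := Real.sqrt_nonneg _
  have hs2 : s^2 = (β - a)^2 + 4/β := Real.sq_sqrt hDpos.le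
  have hs2' : β * s^2 = β * (β - a)^2 + 4 := by
    rw [hs2]; field_simp
  set γ : ℝ := ((a:ℝ) - β + s)/2 with hγdef
  have hsba : β - (a:ℝ) < s := by
    by_contra hc
    push_neg at hc
    have h1 : (0:ℝ) ≤ (β - a - s) * (β - a + s) :=
      mul_nonneg (by linarith) (by linarith)
    nlinarith [hs2', hβ0]
  have hγ0 : 0 < γ := by rw [hγdef]; linarith
  have hγ1 : γ < 1 := by
    have h2 : 4/β < 4 := by rw [div_lt_iff₀ hβ0]; nlinarith
    have hlt : s < 2 - (a:ℝ) + β := by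
      by_contra hc
      push_neg at hc
      have h1 : (0:ℝ) ≤ (s - (2 - a + β)) * (s + (2 - a + β)) :=
        mul_nonneg (by linarith) (by linarith)
      nlinarith [hs2, h2]
    rw [hγdef]; linarith
  have Qγ' : β * γ^2 + β * (β - (a:ℝ)) * γ = 1 := by
    rw [hγdef]
    linear_combination hs2' / 4
  clear_value s γ
  clear hs hγdef hs2 hs2' hs0 hsba hDpos
  have hrel : β^2*(β - (a:ℝ)) = ((a:ℝ)-1)*β - 1 := by linear_combination hroot
  refine ⟨γ, hγ0, hγ1, ?_, ?_⟩
  · -- key bound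
    have hu : β < (a:ℝ) + ((a:ℝ)-1)/(a:ℝ) := by
      have h1 : β - (a:ℝ) < ((a:ℝ)-1)/β := by
        rw [lt_div_iff₀ hβ0]; nlinarith [hrel]
      have h2 : ((a:ℝ)-1)/β < ((a:ℝ)-1)/(a:ℝ) := by
        apply div_lt_div_of_pos_left <;> nlinarith
      linarith
    have ha0 : (0:ℝ) < (a:ℝ) := by linarith
    have hβu : (a:ℝ)*β < (a:ℝ)^2 + (a:ℝ) - 1 := by
      have h4 := mul_lt_mul_of_pos_left hu ha0
      have h5 : (a:ℝ) * (((a:ℝ)-1)/(a:ℝ)) = (a:ℝ)-1 := mul_div_cancel₀ _ (ne_of_gt ha0)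
      nlinarith [h4, h5]
    have h3 : (0:ℝ) ≤ (a:ℝ) - 3 := by linarith
    have end1 : (a:ℝ)^2 - (2*(a:ℝ)-3)*((a:ℝ)-2)*(a:ℝ) - (2*(a:ℝ)-3) < 0 := by
      nlinarith [pow_nonneg h3 2, pow_nonneg h3 3, h3]
    -- endpoint at u = a + (a-1)/a, scaled by a^2
    have end2 : ((a:ℝ)^2+(a:ℝ)-1)^2 - (2*(a:ℝ)-3)*((a:ℝ)-2)*((a:ℝ)^2+(a:ℝ)-1)*(a:ℝ)
        - (2*(a:ℝ)-3)*(a:ℝ)^2 < 0 := by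
      nlinarith [pow_nonneg h3 2, pow_nonneg h3 3, pow_nonneg h3 4, pow_nonneg h3 5, h3]
    have hg : β^2 - (2*(a:ℝ)-3)*((a:ℝ)-2)*β - (2*(a:ℝ)-3) < 0 := by
      nlinarith [end1, end2, mul_pos (sub_pos.2 hβa) (sub_pos.2 hβu),
        mul_pos ha0 ha0, sq_nonneg ((a:ℝ)*β - ((a:ℝ)^2+(a:ℝ)-1)), hβ0, ha0]
    by_contra hle
    push_neg at hle
    have h2a3 : (0:ℝ) < 2*(a:ℝ)-3 := by linarith
    set t : ℝ := 1/(2*(a:ℝ)-3) with ht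
    have ht0 : 0 < t := by positivity
    have hγle : γ ≤ t := by
      rw [ht, le_div_iff₀ h2a3]
      nlinarith [hle]
    have m1 : β*γ^2 ≤ β*t^2 :=
      mul_le_mul_of_nonneg_left (pow_le_pow_left₀ hγ0.le hγle 2) hβ0.le
    have h7 : (0:ℝ) ≤ β*(β-(a:ℝ)) := by nlinarith
    have m2 : β*(β-(a:ℝ))*γ ≤ β*(β-(a:ℝ))*t :=
      mul_le_mul_of_nonneg_left hγle h7
    have e1 : 1 ≤ β*t^2 + β*(β-(a:ℝ))*t := by linarith [Qγ', m1, m2]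
    have e2' : (2*(a:ℝ)-3)^2*(β*t^2 + β*(β-(a:ℝ))*t) = β + β*(β-(a:ℝ))*(2*(a:ℝ)-3) := by
      rw [ht]; field_simp
    have e2 : (2*(a:ℝ)-3)^2 ≤ β + β*(β-(a:ℝ))*(2*(a:ℝ)-3) := by
      calc (2*(a:ℝ)-3)^2 = (2*(a:ℝ)-3)^2 * 1 := by ring
        _ ≤ (2*(a:ℝ)-3)^2*(β*t^2 + β*(β-(a:ℝ))*t) :=
            mul_le_mul_of_nonneg_left e1 (sq_nonneg _)
        _ = _ := e2'
    have e3 : β*(2*(a:ℝ)-3)^2 ≤ β^2 + β^2*(β-(a:ℝ))*(2*(a:ℝ)-3) := by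
      have h6 := mul_le_mul_of_nonneg_left e2 hβ0.le
      nlinarith [h6]
    have e4 : β^2*(β-(a:ℝ))*(2*(a:ℝ)-3) = (2*(a:ℝ)-3)*(((a:ℝ)-1)*β-1) := by
      linear_combination (2*(a:ℝ)-3) * hrel
    linarith [e3, e4, hg]
  · -- cubic for γ
    have hc : β*(γ^3 - (a:ℝ)*γ^2 - ((a:ℝ)-1)*γ + 1) = 0 := by
      linear_combination (γ - β) * Qγ' + γ * hroot
    rcases mul_eq_zero.mp hc with h | h
    · exact absurd h hβne
    · linarith [h]



lemma bD_chain {a : ℤ} {β : ℝ} (ha : 3 ≤ a) (hβ : 1 < β)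
    (hroot : β ^ 3 - (a : ℝ) * β ^ 2 - ((a : ℝ) - 1) * β + 1 = 0)
    (u : ℝ) (hu : u ∈ Set.Ico (0:ℝ) 1) (k : ℕ) (hk : bD β u k = a) :
    bD β u (k+1) ≤ a - 2 := by
  have ha' : (3:ℝ) ≤ (a:ℝ) := by exact_mod_cast ha
  have hβ0 : (0:ℝ) < β := by linarith
  have h1 : ((a:ℝ)) ≤ β * bR β u k := by
    have := Int.floor_le (β * bR β u k)
    rw [bD] at hk
    rw [← hk]; exact_mod_cast this
  have hr1 := (bR_mem β u hu k).2
  have h2 : β * bR β u k < β := by nlinarith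
  have h3 : β * bR β u (k+1) < (a:ℝ) - 1 := by
    rw [bR_succ, hk]
    have h4 : β^2 - (a:ℝ)*β < (a:ℝ) - 1 := by nlinarith
    nlinarith
  have h5 : β * bR β u (k+1) < (((a - 2 : ℤ) : ℝ) + 1) := by push_cast; linarith
  have := Int.floor_lt.2 (by exact_mod_cast h5 : β * bR β u (k+1) < ((a-2+1 : ℤ) : ℝ))
  rw [bD]
  omega

lemma digitSum_le (a : ℤ) (ha : 3 ≤ a) (γ : ℝ) (h0 : 0 < γ) (h1 : γ < 1) :
    ∀ m : ℕ, ∀ e : ℕ → ℤ, (∀ j, 0 ≤ e j) → (∀ j, e j ≤ a) →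
      (∀ j, e (j+1) = a → e j ≤ a - 2) →
      ((∑ j ∈ range m, (e j : ℝ) * γ^j ≤ (a:ℝ) + ((a:ℝ)-1)*γ/(1-γ)) ∧
       (e 0 ≤ a - 1 → ∑ j ∈ range m, (e j : ℝ) * γ^j ≤ ((a:ℝ)-1)/(1-γ))) := by
  have ha' : (3:ℝ) ≤ (a:ℝ) := by exact_mod_cast ha
  have h1γ : (0:ℝ) < 1 - γ := by linarith
  intro m
  induction m with
  | zero =>
    intro e he0 hea hch
    have hnn : (0:ℝ) ≤ ((a:ℝ)-1)*γ/(1-γ) :=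
      div_nonneg (mul_nonneg (by linarith) h0.le) h1γ.le
    have hnn' : (0:ℝ) ≤ ((a:ℝ)-1)/(1-γ) := div_nonneg (by linarith) h1γ.le
    constructor
    · simp; linarith
    · intro _; simp; linarith
  | succ n ih =>
    intro e he0 hea hch
    set B : ℝ := (a:ℝ) + ((a:ℝ)-1)*γ/(1-γ) with hB
    set B' : ℝ := ((a:ℝ)-1)/(1-γ) with hB'
    have hBeq : B = (a:ℝ) + γ * B' := by rw [hB, hB']; ring
    have hB'eq : B' = ((a:ℝ)-1) + γ * B' := by
      rw [hB']; field_simp; ring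
    obtain ⟨ihB, ihB'⟩ := ih (fun j => e (j+1)) (fun j => he0 _) (fun j => hea _)
      (fun j hj => hch _ hj)
    have hsplit : ∑ j ∈ range (n+1), (e j : ℝ) * γ^j
        = γ * (∑ j ∈ range n, (e (j+1) : ℝ) * γ^j) + (e 0 : ℝ) := by
      rw [Finset.sum_range_succ' (fun j => (e j : ℝ) * γ^j) n, Finset.mul_sum,
        pow_zero, mul_one]
      congr 1
      apply Finset.sum_congr rfl
      intro k _
      ring
    constructor
    · rcases eq_or_lt_of_le (hea 0) with h00 | h00
      · -- e 0 = a ; then e 1 ≤ a - 1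
        have he1 : e 1 ≤ a - 1 := by
          by_contra hc
          push_neg at hc
          have : e 1 = a := le_antisymm (hea 1) (by omega)
          have := hch 0 this
          omega
        have hS' := ihB' he1
        rw [hsplit, hBeq]
        have : (e 0 : ℝ) = (a : ℝ) := by exact_mod_cast h00
        rw [this]
        nlinarith [hS', h0.le]
      · -- e 0 ≤ a - 1
        have hS := ihB
        rw [hsplit]
        have he0r : (e 0 : ℝ) ≤ (a:ℝ) - 1 := by
          have : e 0 ≤ a - 1 := by omega
          exact_mod_cast this
        have hBnn : (0:ℝ) ≤ B' := by rw [hB']; exact div_nonneg (by linarith) h1γ.le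
        have : γ * ∑ j ∈ range n, (e (j+1) : ℝ) * γ^j ≤ γ * B :=
          mul_le_mul_of_nonneg_left hS h0.le
        have hkey : ((a:ℝ) - 1) + γ * B ≤ B := by
          have hBval : (1-γ) * B = (a:ℝ) - γ := by
            rw [hB]; field_simp; ring
          nlinarith [hBval]
        linarith
    · intro he01
      rcases Int.lt_or_le (a - 1) (e 1) with h11 | h11
      · -- e 1 = a, so e 0 ≤ a - 2
        have he1a : e 1 = a := le_antisymm (hea 1) (by omega)
        have he02 : e 0 ≤ a - 2 := hch 0 he1a
        have hS := ihB
        rw [hsplit]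
        have he0r : (e 0 : ℝ) ≤ (a:ℝ) - 2 := by exact_mod_cast he02
        have hkey : ((a:ℝ) - 2) + γ * B ≤ B' := by
          have hBval : (1-γ) * B = (a:ℝ) - γ := by
            rw [hB]; field_simp; ring
          have hB'val : (1-γ) * B' = (a:ℝ) - 1 := by
            rw [hB']; field_simp
          nlinarith [hBval, hB'val, h0, h1γ]
        have := mul_le_mul_of_nonneg_left hS h0.le
        linarith
      · -- e 1 ≤ a - 1
        have hS' := ihB' h11
        rw [hsplit]
        have he0r : (e 0 : ℝ) ≤ (a:ℝ) - 1 := by exact_mod_cast he01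
        have := mul_le_mul_of_nonneg_left hS' h0.le
        linarith [hB'eq]

-- the integer cubic
noncomputable def Pcubic (a : ℤ) : ℤ[X] := X^3 - C a * X^2 - C (a-1) * X + C 1

lemma Pcubic_monic (a : ℤ) : (Pcubic a).Monic := by
  unfold Pcubic
  monicity!

lemma Pcubic_natDegree (a : ℤ) : (Pcubic a).natDegree = 3 := by
  unfold Pcubic
  compute_degree!

lemma Pcubic_aeval_real (a : ℤ) (x : ℝ) :
    aeval x (Pcubic a) = x^3 - (a:ℝ)*x^2 - ((a:ℝ)-1)*x + 1 := by
  simp only [Pcubic, map_add, map_sub, map_mul, map_pow, aeval_X, aeval_C, map_one,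
    algebraMap_int_eq, eq_intCast, map_intCast]

lemma Pcubic_no_rat_root (a : ℤ) (ha : 3 ≤ a) (q : ℚ) :
    aeval q (Pcubic a) ≠ 0 := by
  intro hq
  have hint : IsIntegral ℤ q := ⟨Pcubic a, Pcubic_monic a, by
    rwa [aeval_def] at hq ⟩
  obtain ⟨m, hm⟩ := IsIntegrallyClosed.isIntegral_iff.mp hint
  have hme : (m : ℚ) = q := by exact_mod_cast hm
  rw [← hme] at hq
  have hmz : (m:ℚ)^3 - (a:ℚ)*(m:ℚ)^2 - ((a:ℚ)-1)*(m:ℚ) + 1 = 0 := by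
    simpa [Pcubic, push_cast] using hq
  have hz : m^3 - a*m^2 - (a-1)*m + 1 = 0 := by exact_mod_cast hmz
  have hdvd : m ∣ 1 := ⟨a*m + (a-1) - m^2, by linear_combination hz⟩
  rcases Int.isUnit_iff.mp (isUnit_of_dvd_one hdvd) with h | h <;> rw [h] at hz <;> omega

lemma Pcubic_map_irred (a : ℤ) (ha : 3 ≤ a) :
    Irreducible ((Pcubic a).map (algebraMap ℤ ℚ)) := by
  set Pq : ℚ[X] := (Pcubic a).map (algebraMap ℤ ℚ) with hPq
  have hdeg : Pq.natDegree = 3 := by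
    rw [hPq, natDegree_map_eq_of_injective (algebraMap ℤ ℚ).injective_int]
    exact Pcubic_natDegree a
  have hne : Pq ≠ 0 := fun h => by simp [h] at hdeg
  have noroot : ∀ q : ℚ, ¬ Pq.IsRoot q := by
    intro q hq
    apply Pcubic_no_rat_root a ha q
    rw [aeval_def, ← eval_map]
    exact hq
  constructor
  · intro hu
    rw [Polynomial.isUnit_iff_degree_eq_zero] at hu
    rw [Polynomial.degree_eq_natDegree hne, hdeg] at hu
    exact absurd hu (by norm_num)
  · intro f g hfg
    by_contra hc
    push_neg at hc
    obtain ⟨hf, hg⟩ := hc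
    have hfne : f ≠ 0 := fun h => hne (by rw [hfg, h, zero_mul])
    have hgne : g ≠ 0 := fun h => hne (by rw [hfg, h, mul_zero])
    have hdegs : f.natDegree + g.natDegree = 3 := by
      rw [← Polynomial.natDegree_mul hfne hgne, ← hfg, hdeg]
    have hf1 : 1 ≤ f.natDegree := by
      by_contra h
      push_neg at h
      interval_cases hfd : f.natDegree
      · exact hf (Polynomial.isUnit_iff_degree_eq_zero.2 (Polynomial.degree_eq_natDegree hfne ▸ by rw [hfd]; rfl))
    have hg1 : 1 ≤ g.natDegree := by
      by_contra h
      push_neg at h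
      interval_cases hgd : g.natDegree
      · exact hg (Polynomial.isUnit_iff_degree_eq_zero.2 (Polynomial.degree_eq_natDegree hgne ▸ by rw [hgd]; rfl))
    -- one of them has natDegree 1
    have : f.natDegree = 1 ∨ g.natDegree = 1 := by omega
    rcases this with h1 | h1
    · obtain ⟨c, hc0, b, hcb⟩ := Polynomial.natDegree_eq_one.mp h1
      have : Pq.IsRoot (-b/c) := by
        rw [hfg, Polynomial.IsRoot, eval_mul, ← hcb]
        simp
        left
        field_simp
        ring
      exact noroot _ this
    · obtain ⟨c, hc0, b, hcb⟩ := Polynomial.natDegree_eq_one.mp h1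
      have : Pq.IsRoot (-b/c) := by
        rw [hfg, Polynomial.IsRoot, eval_mul, ← hcb]
        simp
        right
        field_simp
        ring
      exact noroot _ this

lemma transfer (a : ℤ) (ha : 3 ≤ a) (β γ : ℝ) (hβ : 1 < β)
    (hroot : β ^ 3 - (a : ℝ) * β ^ 2 - ((a : ℝ) - 1) * β + 1 = 0)
    (hγroot : γ ^ 3 - (a : ℝ) * γ ^ 2 - ((a : ℝ) - 1) * γ + 1 = 0)
    (R : ℤ[X]) (hR : aeval β R = 0) : aeval γ R = 0 := by
  set Pq : ℚ[X] := (Pcubic a).map (algebraMap ℤ ℚ) with hPq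
  have hPqβ : aeval β Pq = 0 := by
    rw [hPq, aeval_map_algebraMap, Pcubic_aeval_real]
    exact hroot
  have hPqmonic : Pq.Monic := (Pcubic_monic a).map _
  have hmin : Pq = minpoly ℚ β :=
    minpoly.eq_of_irreducible_of_monic (Pcubic_map_irred a ha) hPqβ hPqmonic
  have hdvd : Pq ∣ R.map (algebraMap ℤ ℚ) := by
    rw [hmin]
    apply minpoly.dvd
    rw [aeval_map_algebraMap]
    exact hR
  obtain ⟨S, hS⟩ := hdvd
  have : aeval γ (R.map (algebraMap ℤ ℚ)) = aeval γ Pq * aeval γ S := by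
    rw [hS, map_mul]
  rw [aeval_map_algebraMap] at this
  rw [this, hPq, aeval_map_algebraMap, Pcubic_aeval_real, hγroot, zero_mul]


lemma betaT_zero (β : ℝ) : betaT β 0 = 0 := by simp [betaT]

lemma iterate_shift (β u : ℝ) (hβ : 1 < β) (hu : u ∈ Set.Ico (0:ℝ) 1) :
    ∀ j, (betaT β)^[j] (u/β^j) = u := by
  intro j
  induction j with
  | zero => simp
  | succ n ih =>
    rw [Function.iterate_succ_apply]
    have hβ0 : (0:ℝ) < β := by linarith
    have hpow : (0:ℝ) < β^n := pow_pos hβ0 n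
    have hpow1 : (1:ℝ) ≤ β^n := one_le_pow₀ hβ.le
    have hstep : betaT β (u/β^(n+1)) = u/β^n := by
      have h1 : β * (u/β^(n+1)) = u/β^n := by
        field_simp
        ring
      have h2 : ⌊u/β^n⌋ = 0 := by
        apply Int.floor_eq_zero_iff.2
        constructor
        · exact div_nonneg hu.1 hpow.le
        · have : u/β^n ≤ u := by
            rw [div_le_iff₀ hpow]
            nlinarith [hu.1]
          simp only [Set.mem_Ico] at *
          linarith [hu.2]
      simp only [betaT, h1, h2]
      simp
    rw [hstep, ih]


lemma counterex {a : ℤ} {β : ℝ} (ha : 3 ≤ a) (hβ : 1 < β)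
    (hroot : β ^ 3 - (a : ℝ) * β ^ 2 - ((a : ℝ) - 1) * β + 1 = 0)
    (hβa : (a:ℝ) < β) (hβa1 : β < (a:ℝ) + 1) :
    ∃ x ∈ betaInt β, ∃ y ∈ betaInt β, x + y ∈ finBeta β ∧ x + y ∉ betaInt β := by
  have ha' : (3:ℝ) ≤ (a:ℝ) := by exact_mod_cast ha
  have hβ0 : (0:ℝ) < β := by linarith
  have hβne : β ≠ 0 := ne_of_gt hβ0
  set z : ℝ := (a:ℝ)*β + ((a:ℝ)-1) with hz
  have hzβ : z*β = β^3 + 1 := by rw [hz]; linear_combination -hroot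
  have hzpos : 0 < z := by rw [hz]; nlinarith
  have habs : |(a:ℝ)*β + ((a:ℝ)-1)| = z := abs_of_nonneg (by positivity)
  have hzgt : β^2 < z := by nlinarith [hzβ]
  have hzlt : z < β^3 := by nlinarith [hzβ]
  have hmem3 : z/β^3 ∈ Set.Ico (0:ℝ) 1 := by
    constructor
    · positivity
    · rw [div_lt_one (by positivity)]; exact hzlt
  have hs1 : betaT β (z/β^3) = 1/β^3 := by
    have h1 : β * (z/β^3) = 1 + 1/β^3 := by
      field_simp
      linear_combination hzβ
    have hb3 : (0:ℝ) < 1/β^3 := by positivity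
    have hb3' : 1/β^3 < 1 := by rw [div_lt_one (by positivity)]; nlinarith
    have h2 : ⌊(1:ℝ) + 1/β^3⌋ = 1 :=
      Int.floor_eq_iff.2 ⟨by push_cast; linarith, by push_cast; linarith⟩
    simp only [betaT, h1, h2]
    push_cast
    ring
  have hs2 : betaT β (1/β^3) = 1/β^2 := by
    have h1 : β * (1/β^3) = 1/β^2 := by field_simp
    have h2 : ⌊(1:ℝ)/β^2⌋ = 0 := by
      apply Int.floor_eq_zero_iff.2
      refine ⟨by positivity, ?_⟩
      rw [div_lt_one (by positivity)]; nlinarith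
    simp only [betaT, h1, h2]
    simp
  have hs3 : betaT β (1/β^2) = 1/β := by
    have h1 : β * (1/β^2) = 1/β := by field_simp
    have h2 : ⌊(1:ℝ)/β⌋ = 0 := by
      apply Int.floor_eq_zero_iff.2
      refine ⟨by positivity, ?_⟩
      rw [div_lt_one hβ0]; linarith
    simp only [betaT, h1, h2]
    simp
  have hs4 : betaT β (1/β) = 0 := by
    have h1 : β * (1/β) = ((1:ℤ):ℝ) := by push_cast; field_simp
    simp only [betaT, h1, Int.floor_intCast]
    push_cast
    ring
  have hT3 : (betaT β)^[3] (z/β^3) = 1/β := by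
    show betaT β (betaT β (betaT β (z/β^3))) = 1/β
    rw [hs1, hs2, hs3]
  refine ⟨(a:ℝ)*β, ?_, (a:ℝ)-1, ?_, ?_, ?_⟩
  · -- aβ ∈ betaInt with N = 2
    refine ⟨2, ?_, ?_⟩
    · have habs2 : |(a:ℝ)*β| = (a:ℝ)*β := abs_of_nonneg (by positivity)
      rw [habs2]
      refine ⟨by positivity, ?_⟩
      rw [div_lt_one (by positivity)]
      nlinarith
    · have habs2 : |(a:ℝ)*β| = (a:ℝ)*β := abs_of_nonneg (by positivity)
      rw [habs2]
      have h1 : (a:ℝ)*β/β^2 = (a:ℝ)/β := by field_simp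
      rw [h1]
      have hstep : betaT β ((a:ℝ)/β) = 0 := by
        have h2 : β * ((a:ℝ)/β) = (a:ℝ) := by field_simp
        simp only [betaT, h2, Int.floor_intCast]
        ring
      show betaT β (betaT β ((a:ℝ)/β)) = 0
      rw [hstep, betaT_zero]
  · -- a - 1 ∈ betaInt with N = 1
    refine ⟨1, ?_, ?_⟩
    · have habs2 : |(a:ℝ)-1| = (a:ℝ)-1 := abs_of_nonneg (by linarith)
      rw [habs2]
      refine ⟨?_, ?_⟩
      · rw [pow_one]; exact div_nonneg (by linarith) hβ0.le
      · rw [pow_one, div_lt_one hβ0]; linarith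
    · have habs2 : |(a:ℝ)-1| = (a:ℝ)-1 := abs_of_nonneg (by linarith)
      rw [habs2, pow_one]
      show betaT β (((a:ℝ)-1)/β) = 0
      have h2 : β * (((a:ℝ)-1)/β) = ((a-1:ℤ):ℝ) := by push_cast; field_simp
      simp only [betaT, h2, Int.floor_intCast]
      push_cast
      ring
  · -- z ∈ finBeta
    refine ⟨3, 4, by rwa [habs], ?_⟩
    rw [habs]
    show betaT β (betaT β (betaT β (betaT β (z/β^3)))) = 0
    rw [hs1, hs2, hs3, hs4]
  · -- z ∉ betaInt
    rintro ⟨M, hmem, hit⟩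
    rw [habs] at hmem hit
    rcases le_or_gt M 2 with hM | hM
    · have hp : β^M ≤ β^2 := pow_le_pow_right₀ hβ.le hM
      have := hmem.2
      rw [div_lt_one (by positivity)] at this
      linarith
    · obtain ⟨j, rfl⟩ : ∃ j, M = 3 + j := ⟨M-3, by omega⟩
      have hsplit : z/β^(3+j) = (z/β^3)/β^j := by
        rw [div_div, ← pow_add]
      rw [hsplit, Function.iterate_add_apply, iterate_shift β (z/β^3) hβ hmem3, hT3] at hit
      have : (0:ℝ) < 1/β := by positivity
      linarith [hit]



-- bound one admissible-digit conjugate sum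
lemma conj_bound {a : ℤ} {β γ : ℝ} (ha : 3 ≤ a) (hβ : 1 < β)
    (hroot : β ^ 3 - (a : ℝ) * β ^ 2 - ((a : ℝ) - 1) * β + 1 = 0)
    (hγ0 : 0 < γ) (hγ1 : γ < 1)
    (w : ℝ) (hw : w ∈ Set.Ico (0:ℝ) 1) (M : ℕ) :
    ∑ k ∈ range M, (bD β w k : ℝ) * γ^(M-1-k) ≤ (a:ℝ) + ((a:ℝ)-1)*γ/(1-γ) := by
  have hβ0 : (0:ℝ) < β := by linarith
  have hβa1 := beta_lt ha hβ hroot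
  have ha' : (3:ℝ) ≤ (a:ℝ) := by exact_mod_cast ha
  set e : ℕ → ℤ := fun j => if j < M then bD β w (M-1-j) else 0 with he
  have he0 : ∀ j, 0 ≤ e j := by
    intro j; rw [he]; dsimp only; split
    · exact bD_nonneg β w hβ0 hw _
    · exact le_refl 0
  have hea : ∀ j, e j ≤ a := by
    intro j; rw [he]; dsimp only; split
    · exact bD_le a β w hβ0 hβa1 hw _
    · omega
  have hech : ∀ j, e (j+1) = a → e j ≤ a - 2 := by
    intro j hj
    rw [he] at hj ⊢
    dsimp only at hj ⊢
    by_cases hjM : j + 1 < M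
    · rw [if_pos hjM] at hj
      rw [if_pos (by omega)]
      have := bD_chain ha hβ hroot w hw (M-1-(j+1)) hj
      have hidx : M-1-(j+1)+1 = M-1-j := by omega
      rwa [hidx] at this
    · rw [if_neg hjM] at hj
      omega
  have heq : ∑ k ∈ range M, (bD β w k : ℝ) * γ^(M-1-k)
      = ∑ j ∈ range M, (e j : ℝ) * γ^j := by
    rw [← Finset.sum_range_reflect (fun j => (e j : ℝ) * γ^j) M]
    apply Finset.sum_congr rfl
    intro k hk
    have hkM : k < M := mem_range.1 hk
    rw [he]; dsimp only
    rw [if_pos (by omega : M - 1 - k < M)]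
    have h1 : M - 1 - (M - 1 - k) = k := by omega
    rw [h1]
  rw [heq]
  exact (digitSum_le a ha γ hγ0 hγ1 M e he0 hea hech).1

lemma conj_nonneg {β γ : ℝ} (hβ0 : 0 < β) (hγ0 : 0 < γ)
    (w : ℝ) (hw : w ∈ Set.Ico (0:ℝ) 1) (M : ℕ) :
    0 ≤ ∑ k ∈ range M, (bD β w k : ℝ) * γ^(M-1-k) := by
  apply Finset.sum_nonneg
  intro k _
  have := bD_nonneg β w hβ0 hw k
  have : (0:ℝ) ≤ (bD β w k : ℝ) := by exact_mod_cast this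
  positivity

lemma key_add {a : ℤ} {β : ℝ} (ha : 3 ≤ a) (hβ : 1 < β)
    (hroot : β ^ 3 - (a : ℝ) * β ^ 2 - ((a : ℝ) - 1) * β + 1 = 0) :
    ∀ x ∈ betaInt β, ∀ y ∈ betaInt β, x + y ∈ finBeta β → 0 ≤ x + y →
      β * (x + y) ∈ betaInt β := by
  intro x hx y hy hfin hpos
  have ha' : (3:ℝ) ≤ (a:ℝ) := by exact_mod_cast ha
  have hβ0 : (0:ℝ) < β := by linarith
  have hβne : β ≠ 0 := ne_of_gt hβ0
  have hβa1 := beta_lt ha hβ hroot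
  obtain ⟨γ, hγ0, hγ1, hγkey, hγcubic⟩ := gamma_exists ha hβ hroot
  have h1γ : (0:ℝ) < 1 - γ := by linarith
  set z : ℝ := x + y with hzdef
  obtain ⟨N, n, hmem, hit⟩ := hfin
  have habsz : |z| = z := abs_of_nonneg hpos
  rw [habsz] at hmem hit
  set u : ℝ := z / β ^ N with hu
  -- z = β^N * u
  have hzu : z = β ^ N * u := by rw [hu]; field_simp
  have hitR : bR β u n = 0 := hit
  have hvanish : ∀ k, n ≤ k → bD β u k = 0 := by
    intro k hk
    have := bR_zero_persist β u hitR k hk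
    rw [bD, this]
    simp
  by_cases hcase : ∀ k, N + 1 ≤ k → bD β u k = 0
  · -- no deep fractional digits: β z is a beta-integer with exponent N+1
    refine ⟨N + 1, ?_, ?_⟩
    · have habs : |β * z| = β * z := abs_of_nonneg (by positivity)
      rw [habs]
      have hq : β * z / β ^ (N+1) = u := by
        rw [hu, pow_succ]
        field_simp
      rw [hq]
      exact hmem
    · have habs : |β * z| = β * z := abs_of_nonneg (by positivity)
      rw [habs]
      have hq : β * z / β ^ (N+1) = u := by
        rw [hu, pow_succ]
        field_simp
      rw [hq]
      show bR β u (N+1) = 0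
      set m : ℕ := max n (N+1) with hm
      have hrm : bR β u m = 0 := bR_zero_persist β u hitR m (le_max_left _ _)
      exact bR_backzero β u hβ0 hrm hcase (le_max_right _ _)
  · -- deep fractional digit exists: contradiction
    exfalso
    push_neg at hcase
    obtain ⟨k0, hk0N, hk0ne⟩ := hcase
    have hk0n : k0 < n := by
      by_contra hc
      push_neg at hc
      exact hk0ne (hvanish k0 hc)
    set S : Finset ℕ := (range n).filter (fun k => bD β u k ≠ 0) with hS
    have hSne : S.Nonempty := ⟨k0, by simp [hS, mem_filter, mem_range]; exact ⟨hk0n, hk0ne⟩⟩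
    set n' : ℕ := S.max' hSne with hn'
    have hn'mem : n' ∈ S := S.max'_mem hSne
    have hdn' : bD β u n' ≠ 0 := (mem_filter.1 hn'mem).2
    have hn'n : n' < n := mem_range.1 (mem_filter.1 hn'mem).1
    have hNn' : N + 1 ≤ n' := by
      have : k0 ≤ n' := S.le_max' k0 (by simp [hS, mem_filter, mem_range]; exact ⟨hk0n, hk0ne⟩)
      omega
    have hafter : ∀ k, n' + 1 ≤ k → bD β u k = 0 := by
      intro k hk
      by_cases hkn : k < n
      · by_contra hne
        have : k ∈ S := mem_filter.2 ⟨mem_range.2 hkn, hne⟩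
        have := S.le_max' k this
        omega
      · exact hvanish k (by omega)
    have hrn' : bR β u (n'+1) = 0 :=
      bR_backzero β u hβ0 hitR hafter (by omega)
    -- representation of β^s z
    have hsum_z : β ^ (n'+1) * u = ∑ k ∈ range (n'+1), (bD β u k : ℝ) * β ^ (n'-k) := by
      have := bR_sum β u (n'+1)
      rw [hrn'] at this
      rw [this, add_zero]
      apply Finset.sum_congr rfl
      intro k hk
      norm_num
    set s : ℕ := n' + 1 - N with hs
    have hs2 : 2 ≤ s := by omega
    have hsN : s + N = n' + 1 := by omega
    -- x and y representations
    obtain ⟨Nx, hxmem, hxit⟩ := hx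
    obtain ⟨Ny, hymem, hyit⟩ := hy
    set ux : ℝ := |x| / β ^ Nx with hux
    set uy : ℝ := |y| / β ^ Ny with huy
    have hxabs : |x| = β ^ Nx * ux := by rw [hux]; field_simp
    have hyabs : |y| = β ^ Ny * uy := by rw [huy]; field_simp
    have hsum_x : |x| = ∑ k ∈ range Nx, (bD β ux k : ℝ) * β ^ (Nx-1-k) := by
      have h1 := bR_sum β ux Nx
      have h2 : bR β ux Nx = 0 := hxit
      rw [h2, add_zero] at h1
      rw [hxabs, h1]
    have hsum_y : |y| = ∑ k ∈ range Ny, (bD β uy k : ℝ) * β ^ (Ny-1-k) := by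
      have h1 := bR_sum β uy Ny
      have h2 : bR β uy Ny = 0 := hyit
      rw [h2, add_zero] at h1
      rw [hyabs, h1]
    -- signs
    set εx : ℤ := if 0 ≤ x then 1 else -1 with hεx
    set εy : ℤ := if 0 ≤ y then 1 else -1 with hεy
    have hxsgn : x = (εx : ℝ) * |x| := by
      rw [hεx]
      rcases le_or_gt 0 x with h | h
      · rw [if_pos h, abs_of_nonneg h]; push_cast; ring
      · rw [if_neg (not_le.2 h), abs_of_neg h]; push_cast; ring
    have hysgn : y = (εy : ℝ) * |y| := by
      rw [hεy]
      rcases le_or_gt 0 y with h | h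
      · rw [if_pos h, abs_of_nonneg h]; push_cast; ring
      · rw [if_neg (not_le.2 h), abs_of_neg h]; push_cast; ring
    -- the polynomial
    set R : ℤ[X] := (∑ k ∈ range (n'+1), C (bD β u k) * X^(n'-k))
        - C εx * X^s * (∑ k ∈ range Nx, C (bD β ux k) * X^(Nx-1-k))
        - C εy * X^s * (∑ k ∈ range Ny, C (bD β uy k) * X^(Ny-1-k)) with hR
    have haevalβ : aeval β R = 0 := by
      rw [hR]
      simp only [map_sub, map_mul, map_sum, map_pow, aeval_X, aeval_C,
        algebraMap_int_eq, eq_intCast, map_intCast]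
      have e1 : ∑ k ∈ range (n'+1), ((bD β u k : ℝ)) * β ^ (n'-k) = β ^ s * z := by
        rw [← hsum_z, hzu, ← mul_assoc, ← pow_add, hsN]
      have e2 : ∑ k ∈ range Nx, ((bD β ux k : ℝ)) * β ^ (Nx-1-k) = |x| := hsum_x.symm
      have e3 : ∑ k ∈ range Ny, ((bD β uy k : ℝ)) * β ^ (Ny-1-k) = |y| := hsum_y.symm
      rw [e1, e2, e3]
      linear_combination (β^s) * hzdef + (β^s) * hxsgn + (β^s) * hysgn
    have haevalγ := transfer a ha β γ hβ hroot hγcubic R haevalβ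
    rw [hR] at haevalγ
    simp only [map_sub, map_mul, map_sum, map_pow, aeval_X, aeval_C,
      algebraMap_int_eq, eq_intCast, map_intCast] at haevalγ
    set Az : ℝ := ∑ k ∈ range (n'+1), (bD β u k : ℝ) * γ ^ (n'-k) with hAz
    set Ax : ℝ := ∑ k ∈ range Nx, (bD β ux k : ℝ) * γ ^ (Nx-1-k) with hAx
    set Ay : ℝ := ∑ k ∈ range Ny, (bD β uy k : ℝ) * γ ^ (Ny-1-k) with hAy
    have heqγ : Az = (εx:ℝ) * γ^s * Ax + (εy:ℝ) * γ^s * Ay := by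
      rw [hAz, hAx, hAy]
      linarith [haevalγ]
    -- lower bound on Az
    have hAzge : (1:ℝ) ≤ Az := by
      rw [hAz]
      have hterm : (1:ℝ) ≤ (bD β u n' : ℝ) * γ ^ (n'-n') := by
        have h1 : 1 ≤ bD β u n' := by
          have := bD_nonneg β u hβ0 hmem n'
          omega
        have h2 : (1:ℝ) ≤ (bD β u n' : ℝ) := by exact_mod_cast h1
        simpa using h2
      calc (1:ℝ) ≤ (bD β u n' : ℝ) * γ ^ (n'-n') := hterm
        _ ≤ ∑ k ∈ range (n'+1), (bD β u k : ℝ) * γ ^ (n'-k) := by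
            apply Finset.single_le_sum (f := fun k => (bD β u k : ℝ) * γ ^ (n'-k))
            · intro i _
              have := bD_nonneg β u hβ0 hmem i
              have h3 : (0:ℝ) ≤ (bD β u i : ℝ) := by exact_mod_cast this
              positivity
            · exact self_mem_range_succ n'
    -- upper bounds
    set B : ℝ := (a:ℝ) + ((a:ℝ)-1)*γ/(1-γ) with hB
    have hAxB : Ax ≤ B := conj_bound ha hβ hroot hγ0 hγ1 ux hxmem Nx
    have hAyB : Ay ≤ B := conj_bound ha hβ hroot hγ0 hγ1 uy hymem Ny
    have hAx0 : 0 ≤ Ax := conj_nonneg hβ0 hγ0 ux hxmem Nx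
    have hAy0 : 0 ≤ Ay := conj_nonneg hβ0 hγ0 uy hymem Ny
    have hγs : γ^s ≤ γ^2 := pow_le_pow_of_le_one hγ0.le hγ1.le hs2
    have hγs0 : 0 ≤ γ^s := by positivity
    have hεxle : (εx:ℝ) ≤ 1 := by rw [hεx]; split <;> norm_num
    have hεyle : (εy:ℝ) ≤ 1 := by rw [hεy]; split <;> norm_num
    have hup : Az ≤ γ^2 * (Ax + Ay) := by
      rw [heqγ]
      have t1 : (εx:ℝ) * γ^s * Ax ≤ γ^s * Ax := by
        have h8 := mul_le_mul_of_nonneg_right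
          (mul_le_mul_of_nonneg_right hεxle hγs0) hAx0
        linarith [h8]
      have t2 : (εy:ℝ) * γ^s * Ay ≤ γ^s * Ay := by
        have h8 := mul_le_mul_of_nonneg_right
          (mul_le_mul_of_nonneg_right hεyle hγs0) hAy0
        linarith [h8]
      have t3 : γ^s * Ax ≤ γ^2 * Ax := mul_le_mul_of_nonneg_right hγs hAx0
      have t4 : γ^s * Ay ≤ γ^2 * Ay := mul_le_mul_of_nonneg_right hγs hAy0
      linarith
    -- final numeric contradiction
    have hBrw : B * (1-γ) = (a:ℝ) - γ := by
      rw [hB]; field_simp; ring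
    have hfin2 : 2*γ^2*((a:ℝ)-γ) < 1 - γ := by linarith [hγcubic, hγkey]
    have h5 : Ax + Ay ≤ 2*B := by linarith
    have h6 : (Ax + Ay)*(1-γ) ≤ 2*((a:ℝ)-γ) := by
      calc (Ax + Ay)*(1-γ) ≤ 2*B*(1-γ) := mul_le_mul_of_nonneg_right h5 h1γ.le
        _ = 2*((a:ℝ)-γ) := by rw [mul_assoc, hBrw]
    have hcontr : γ^2*((Ax + Ay)*(1-γ)) ≤ γ^2*(2*((a:ℝ)-γ)) :=
      mul_le_mul_of_nonneg_left h6 (by positivity)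
    have h7 := mul_le_mul_of_nonneg_right (hAzge.trans hup) h1γ.le
    linarith [h7, hcontr, hfin2]

lemma betaInt_neg {β x : ℝ} (h : x ∈ betaInt β) : -x ∈ betaInt β := by
  simpa [betaInt, abs_neg] using h

theorem stmt11 (a : ℤ) (ha : 3 ≤ a) (β : ℝ) (hβ : 1 < β)
    (hroot : β ^ 3 - (a : ℝ) * β ^ 2 - ((a : ℝ) - 1) * β + 1 = 0) :
    Lplus β = 1 := by
  have hβa := beta_gt ha hβ hroot
  have hβa1 := beta_lt ha hβ hroot
  have h1 : 1 ∈ {L : ℕ | ∀ x ∈ betaInt β, ∀ y ∈ betaInt β,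
      x + y ∈ finBeta β → β ^ L * (x + y) ∈ betaInt β} := by
    intro x hx y hy hfin
    rw [pow_one]
    rcases le_or_gt 0 (x+y) with h | h
    · exact key_add ha hβ hroot x hx y hy hfin h
    · have hx' := betaInt_neg hx
      have hy' := betaInt_neg hy
      have hfin' : -x + -y ∈ finBeta β := by
        have he : |(-x) + -y| = |x + y| := by rw [show (-x) + -y = -(x+y) by ring, abs_neg]
        obtain ⟨N, n, hm, hi⟩ := hfin
        exact ⟨N, n, by rwa [he], by rwa [he]⟩
      have hpos : 0 ≤ -x + -y := by linarith
      have hk := key_add ha hβ hroot (-x) hx' (-y) hy' hfin' hpos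
      have h9 : β * (x + y) = -(β * (-x + -y)) := by ring
      rw [h9]
      exact betaInt_neg hk
  have h0 : 0 ∉ {L : ℕ | ∀ x ∈ betaInt β, ∀ y ∈ betaInt β,
      x + y ∈ finBeta β → β ^ L * (x + y) ∈ betaInt β} := by
    obtain ⟨x, hx, y, hy, hfin, hnot⟩ := counterex ha hβ hroot hβa hβa1
    intro hc
    have := hc x hx y hy hfin
    rw [pow_zero, one_mul] at this
    exact hnot this
  unfold Lplus
  apply le_antisymm
  · exact Nat.sInf_le h1
  · have hmem := Nat.sInf_mem (⟨1, h1⟩ : Set.Nonempty _)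
    rcases Nat.eq_zero_or_pos (sInf {L : ℕ | ∀ x ∈ betaInt β, ∀ y ∈ betaInt β,
      x + y ∈ finBeta β → β ^ L * (x + y) ∈ betaInt β}) with hz | hz
    · rw [hz] at hmem
      exact absurd hmem h0
    · omega

end AuxLemmas
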